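/- Let R be a commutative ring of prime characteristic p > 0 and 𝔞 ⊆ R an ideal generated by at most μ elements. If n > p^e(μ − 1), then 𝔞^n = (𝔞^(⌈n/p^e⌉ − μ))^[p^e] · 𝔞^(n − p^e(⌈n/p^e⌉ − μ)). -/

import Mathlib

def frobPow {R : Type*} [CommSemiring R] (I : Ideal R) (q : ℕ) : Ideal R :=
  Ideal.span ((fun f => f ^ q) '' (I : Set R))

section Aux
variable {R : Type*} [CommRing R]

theorem pow_mem_frobPow {I : Ideal R} {q : ℕ} {x : R} (hx : x ∈ I) :
    x ^ q ∈ frobPow I q :=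
  Ideal.subset_span ⟨x, hx, rfl⟩

theorem frobPow_le_pow (I : Ideal R) (q : ℕ) : frobPow I q ≤ I ^ q := by
  rw [frobPow, Ideal.span_le]
  rintro _ ⟨x, hx, rfl⟩
  exact Ideal.pow_mem_pow hx q

theorem frobPow_top (q : ℕ) : frobPow (⊤ : Ideal R) q = ⊤ := by
  rw [Ideal.eq_top_iff_one]
  have := pow_mem_frobPow (I := (⊤ : Ideal R)) (q := q) (x := 1) trivial
  simpa using this

theorem frobPow_mul_le (I J : Ideal R) (q : ℕ) :
    frobPow I q * frobPow J q ≤ frobPow (I * J) q := by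
  rw [frobPow, frobPow, Ideal.span_mul_span']
  rw [Ideal.span_le]
  rintro _ ⟨_, ⟨x, hx, rfl⟩, _, ⟨y, hy, rfl⟩, rfl⟩
  exact Ideal.subset_span ⟨x * y, Ideal.mul_mem_mul hx hy, by simp [mul_pow]⟩

theorem prod_mem_pow_card {I : Ideal R} {ι : Type*} (s : Finset ι) (g : ι → R)
    (h : ∀ i ∈ s, g i ∈ I) : (∏ i ∈ s, g i) ∈ I ^ s.card := by
  classical
  induction s using Finset.cons_induction with
  | empty => simp [Ideal.one_eq_top]
  | cons a s ha ih =>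
    rw [Finset.prod_cons, Finset.card_cons, pow_succ']
    exact Ideal.mul_mem_mul (h a (Finset.mem_cons_self a s))
      (ih fun i hi => h i (Finset.mem_cons_of_mem hi))

theorem pow_le_frobPow_mul {𝔞 : Ideal R} {S : Finset R} (hS : Ideal.span (S : Set R) = 𝔞)
    {μ q t : ℕ} (hcard : S.card ≤ μ) (hq : 1 ≤ q) (ht : μ * (q - 1) < t) :
    𝔞 ^ t ≤ frobPow 𝔞 q * 𝔞 ^ (t - q) := by
  classical
  subst hS
  rw [Ideal.span, Submodule.span_pow, Submodule.span_le]
  intro a ha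
  rw [Set.mem_pow] at ha
  obtain ⟨f, rfl⟩ := ha
  rw [List.prod_ofFn]
  have hmaps : ∀ i ∈ (Finset.univ : Finset (Fin t)), ((f i : R)) ∈ S := fun i _ => (f i).2
  have hlt : S.card * (q - 1) < (Finset.univ : Finset (Fin t)).card := by
    simp only [Finset.card_univ, Fintype.card_fin]
    exact lt_of_le_of_lt (Nat.mul_le_mul_right _ hcard) ht
  obtain ⟨y, hyS, hy⟩ :=
    Finset.exists_lt_card_fiber_of_mul_lt_card_of_maps_to hmaps hlt
  set F : Finset (Fin t) := {x ∈ Finset.univ | (f x : R) = y} with hF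
  have hqF : q ≤ F.card := by omega
  have hsplit : (∏ i, (f i : R)) =
      (∏ i ∈ F, (f i : R)) * ∏ i ∈ Finset.univ.filter (fun x => ¬ ((f x : R) = y)), (f i : R) := by
    rw [hF]
    exact (Finset.prod_filter_mul_prod_filter_not Finset.univ _ _).symm
  have hFprod : (∏ i ∈ F, (f i : R)) = y ^ F.card := by
    rw [Finset.prod_congr rfl (fun i hi => by
      simp only [hF, Finset.mem_filter] at hi; exact hi.2), Finset.prod_const]
  have hcards : F.card + (Finset.univ.filter (fun x => ¬ ((f x : R) = y))).card = t := by
    have := Finset.card_filter_add_card_filter_not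
      (s := (Finset.univ : Finset (Fin t))) (p := fun x => (f x : R) = y)
    simpa using this
  have hyA : y ∈ Ideal.span (S : Set R) := Ideal.subset_span hyS
  have hrest : y ^ (F.card - q) * ∏ i ∈ Finset.univ.filter (fun x => ¬ ((f x : R) = y)), (f i : R)
      ∈ (Ideal.span (S : Set R)) ^ (t - q) := by
    have h1 : y ^ (F.card - q) ∈ (Ideal.span (S : Set R)) ^ (F.card - q) := Ideal.pow_mem_pow hyA _
    have h2 : (∏ i ∈ Finset.univ.filter (fun x => ¬ ((f x : R) = y)), (f i : R)) ∈
        (Ideal.span (S : Set R)) ^ (Finset.univ.filter (fun x => ¬ ((f x : R) = y))).card :=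
      prod_mem_pow_card _ _ (fun i _ => Ideal.subset_span (hmaps i (Finset.mem_univ i)))
    have := Ideal.mul_mem_mul h1 h2
    rw [← pow_add] at this
    have heq : F.card - q + (Finset.univ.filter (fun x => ¬ ((f x : R) = y))).card = t - q := by
      omega
    rwa [heq] at this
  have : (∏ i, (f i : R)) = y ^ q * (y ^ (F.card - q) *
      ∏ i ∈ Finset.univ.filter (fun x => ¬ ((f x : R) = y)), (f i : R)) := by
    rw [hsplit, hFprod, ← mul_assoc, ← pow_add]
    congr 2
    omega
  rw [this]
  exact Ideal.mul_mem_mul (pow_mem_frobPow hyA) hrest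

theorem pow_le_frobPow_pow_mul {𝔞 : Ideal R} {S : Finset R} (hS : Ideal.span (S : Set R) = 𝔞)
    {μ q : ℕ} (hcard : S.card ≤ μ) (hq : 1 ≤ q) (k m : ℕ) (hm : (μ - 1) * (q - 1) ≤ m) :
    𝔞 ^ (q * k + m) ≤ frobPow (𝔞 ^ k) q * 𝔞 ^ m := by
  induction k with
  | zero => simp [frobPow_top]
  | succ k ih =>
    have ht : μ * (q - 1) < q * (k + 1) + m := by
      have h1 : μ * (q - 1) ≤ (μ - 1) * (q - 1) + (q - 1) := by
        calc μ * (q - 1) ≤ ((μ - 1) + 1) * (q - 1) := Nat.mul_le_mul_right _ (by omega)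
          _ = (μ - 1) * (q - 1) + (q - 1) := by rw [add_mul, one_mul]
      have h2 : q - 1 < q * (k + 1) := by
        have : q ≤ q * (k + 1) := Nat.le_mul_of_pos_right q (by omega)
        omega
      omega
    calc 𝔞 ^ (q * (k + 1) + m)
        ≤ frobPow 𝔞 q * 𝔞 ^ (q * (k + 1) + m - q) := pow_le_frobPow_mul hS hcard hq ht
      _ = frobPow 𝔞 q * 𝔞 ^ (q * k + m) := by
          congr 1
          have : q * (k + 1) + m - q = q * k + m := by
            have : q * (k + 1) = q * k + q := by ring
            omega
          rw [this]
      _ ≤ frobPow 𝔞 q * (frobPow (𝔞 ^ k) q * 𝔞 ^ m) := Ideal.mul_mono_right ih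
      _ = (frobPow 𝔞 q * frobPow (𝔞 ^ k) q) * 𝔞 ^ m := (mul_assoc _ _ _).symm
      _ ≤ frobPow (𝔞 * 𝔞 ^ k) q * 𝔞 ^ m := Ideal.mul_mono_left (frobPow_mul_le _ _ _)
      _ = frobPow (𝔞 ^ (k + 1)) q * 𝔞 ^ m := by rw [← pow_succ']

end Aux

/-- If `𝔞` has at most `μ` generators and `n > p^e(μ − 1)`, then
`𝔞^n = (𝔞^(⌈n/p^e⌉ − μ))^[p^e] · 𝔞^(n − p^e(⌈n/p^e⌉ − μ))`. Here `c = ⌈n/p^e⌉`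
(with `μ ≤ c`, which follows from the hypotheses when `μ ≥ 1`). -/
theorem pow_eq_frobPow_mul_ceil {R : Type*} [CommRing R] (p : ℕ) (hp : p.Prime) [CharP R p]
    (𝔞 : Ideal R) (μ : ℕ) (hμ : ∃ S : Finset R, S.card ≤ μ ∧ Ideal.span (S : Set R) = 𝔞)
    (n e : ℕ) (hn : (p : ℤ) ^ e * ((μ : ℤ) - 1) < (n : ℤ))
    (c : ℕ) (hc : (c : ℤ) = ⌈(n : ℚ) / ((p : ℚ) ^ e)⌉) (hcμ : μ ≤ c) :
    𝔞 ^ n = frobPow (𝔞 ^ (c - μ)) (p ^ e) * 𝔞 ^ (n - p ^ e * (c - μ)) := by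
  obtain ⟨S, hcard, hS⟩ := hμ
  set q : ℕ := p ^ e with hqdef
  have hq : 1 ≤ q := Nat.one_le_pow _ _ hp.pos
  rcases Nat.eq_zero_or_pos μ with hμ0 | hμ1
  · -- μ = 0 : 𝔞 = ⊥
    subst hμ0
    have hSe : S = ∅ := Finset.card_eq_zero.mp (Nat.le_zero.mp hcard)
    have h𝔞 : 𝔞 = ⊥ := by rw [← hS, hSe]; simp
    rcases Nat.eq_zero_or_pos n with hn0 | hn1
    · subst hn0
      have hc0 : c = 0 := by
        have : (c : ℤ) = 0 := by rw [hc]; norm_num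
        exact_mod_cast this
      subst hc0
      simp [frobPow_top]
    · have hc1 : 1 ≤ c := by
        have hpos : (0 : ℚ) < (n : ℚ) / ((p : ℚ) ^ e) := by
          apply div_pos
          · exact_mod_cast hn1
          · have : (0 : ℚ) < (p : ℚ) := by exact_mod_cast hp.pos
            positivity
        have : (0 : ℤ) < c := by
          rw [hc]
          exact Int.ceil_pos.mpr hpos
        omega
      have hbot : 𝔞 ^ n = ⊥ := by
        rw [h𝔞, ← Ideal.zero_eq_bot, zero_pow (by omega)]
      have hbot2 : 𝔞 ^ (c - 0) = ⊥ := by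
        rw [h𝔞, ← Ideal.zero_eq_bot, zero_pow (by omega)]
      rw [hbot, hbot2]
      have : frobPow (⊥ : Ideal R) q = ⊥ := by
        rw [frobPow]
        apply le_bot_iff.mp
        rw [Ideal.span_le]
        rintro _ ⟨x, hx, rfl⟩
        simp only [Submodule.bot_coe, Set.mem_singleton_iff] at hx
        subst hx
        simp [zero_pow (by omega : q ≠ 0)]
      rw [this, ← Ideal.zero_eq_bot, zero_mul]
  · -- μ ≥ 1
    set k : ℕ := c - μ with hkdef
    -- key : q * (c - 1) < n
    have hceil : ((c : ℚ) - 1) * (q : ℚ) < (n : ℚ) := by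
      have h1 : ((c : ℤ) : ℚ) < (n : ℚ) / ((p : ℚ) ^ e) + 1 := by
        rw [hc]
        exact Int.ceil_lt_add_one _
      have hqpos : (0 : ℚ) < (q : ℚ) := by
        have : (0:ℕ) < q := hq
        exact_mod_cast this
      have h2 : (c : ℚ) - 1 < (n : ℚ) / (q : ℚ) := by
        push_cast at h1
        have : ((q : ℕ) : ℚ) = (p : ℚ) ^ e := by push_cast [hqdef]; ring
        rw [this]
        linarith
      calc ((c : ℚ) - 1) * (q : ℚ) < ((n : ℚ) / (q : ℚ)) * (q : ℚ) :=
            mul_lt_mul_of_pos_right h2 hqpos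
        _ = (n : ℚ) := div_mul_cancel₀ _ (ne_of_gt hqpos)
    have hc1 : 1 ≤ c := le_trans hμ1 hcμ
    have hqc : q * (c - 1) < n := by
      have : ((q * (c - 1) : ℕ) : ℚ) < (n : ℚ) := by
        push_cast [Nat.cast_sub hc1]
        linarith [hceil]
      exact_mod_cast this
    have hqk : q * k + q * (μ - 1) = q * (c - 1) := by
      rw [← Nat.mul_add]
      congr 1
      omega
    have hqkn : q * k < n := by omega
    set m : ℕ := n - q * k with hmdef
    have hm : (μ - 1) * (q - 1) ≤ m := by
      have h1 : (μ - 1) * (q - 1) ≤ (μ - 1) * q := Nat.mul_le_mul_left _ (by omega)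
      have h2 : (μ - 1) * q = q * (μ - 1) := Nat.mul_comm _ _
      omega
    have hn_eq : n = q * k + m := by omega
    apply le_antisymm
    · rw [hn_eq]
      exact pow_le_frobPow_pow_mul hS hcard hq k m hm
    · calc frobPow (𝔞 ^ k) q * 𝔞 ^ m ≤ (𝔞 ^ k) ^ q * 𝔞 ^ m :=
            Ideal.mul_mono_left (frobPow_le_pow _ _)
        _ = 𝔞 ^ n := by rw [← pow_mul, ← pow_add]; congr 1; rw [Nat.mul_comm k q]; omega
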